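/- Let λ > 0, Δl > 0, and let X̲, X̄ satisfy −2Δl ≤ X̲ ≤ 0 ≤ X̄ ≤ 2Δl. Define ψ = {(X, W) ∈ R^2 : X̲ ≤ X ≤ X̄, 0 ≤ W, W ≤ λ(X − Δl)^2, W ≤ λ(X + Δl)^2} and Ψ = {(X, W) ∈ R^2 : X̲ ≤ X ≤ X̄, 0 ≤ W, W ≤ λ((X̄ − 2Δl)X + Δl^2), W ≤ λ((X̲ + 2Δl)X + Δl^2)}. Then Ψ is the convex hull of ψ. -/

import Mathlib

private lemma seg2 {a₁ a₂ b₁ b₂ x₁ x₂ t : ℝ} (h0 : 0 ≤ t) (h1 : t ≤ 1)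
    (hx : (1 - t) * a₁ + t * b₁ = x₁) (hy : (1 - t) * a₂ + t * b₂ = x₂) :
    ((x₁, x₂) : ℝ × ℝ) ∈ segment ℝ (a₁, a₂) (b₁, b₂) := by
  refine ⟨1 - t, t, by linarith, h0, by ring, ?_⟩
  simp only [Prod.smul_mk, smul_eq_mul, Prod.mk_add_mk, Prod.mk.injEq]
  exact ⟨hx, hy⟩

theorem stmt4 (lam Δl Xlo Xhi : ℝ) (hlam : 0 < lam) (hΔl : 0 < Δl)
    (h1 : -(2 * Δl) ≤ Xlo) (h2 : Xlo ≤ 0) (h3 : 0 ≤ Xhi) (h4 : Xhi ≤ 2 * Δl) :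
    {p : ℝ × ℝ | Xlo ≤ p.1 ∧ p.1 ≤ Xhi ∧ 0 ≤ p.2 ∧
        p.2 ≤ lam * ((Xhi - 2 * Δl) * p.1 + Δl ^ 2) ∧
        p.2 ≤ lam * ((Xlo + 2 * Δl) * p.1 + Δl ^ 2)} =
      convexHull ℝ {p : ℝ × ℝ | Xlo ≤ p.1 ∧ p.1 ≤ Xhi ∧ 0 ≤ p.2 ∧
        p.2 ≤ lam * (p.1 - Δl) ^ 2 ∧ p.2 ≤ lam * (p.1 + Δl) ^ 2} := by
  set ψ : Set (ℝ × ℝ) := {p : ℝ × ℝ | Xlo ≤ p.1 ∧ p.1 ≤ Xhi ∧ 0 ≤ p.2 ∧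
        p.2 ≤ lam * (p.1 - Δl) ^ 2 ∧ p.2 ≤ lam * (p.1 + Δl) ^ 2} with hψ
  have hlohi : Xlo ≤ Xhi := h2.trans h3
  have hcvx : Convex ℝ (convexHull ℝ ψ) := convex_convexHull ℝ ψ
  have hsub := subset_convexHull ℝ ψ
  -- the five key points of ψ
  have hA : ((Xlo, 0) : ℝ × ℝ) ∈ ψ := by
    refine ⟨le_refl _, hlohi, le_refl _, ?_, ?_⟩ <;> positivity
  have hB : ((Xhi, 0) : ℝ × ℝ) ∈ ψ := by
    refine ⟨hlohi, le_refl _, le_refl _, ?_, ?_⟩ <;> positivity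
  have hC : ((Xlo, lam * (Xlo + Δl) ^ 2) : ℝ × ℝ) ∈ ψ := by
    have key : lam * (Xlo + Δl) ^ 2 ≤ lam * (Xlo - Δl) ^ 2 := by
      nlinarith [mul_nonneg hlam.le (mul_nonneg hΔl.le (neg_nonneg.2 h2))]
    exact ⟨le_refl _, hlohi, by positivity, key, le_refl _⟩
  have hB' : ((Xhi, lam * (Xhi - Δl) ^ 2) : ℝ × ℝ) ∈ ψ := by
    have key : lam * (Xhi - Δl) ^ 2 ≤ lam * (Xhi + Δl) ^ 2 := by
      nlinarith [mul_nonneg hlam.le (mul_nonneg hΔl.le h3)]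
    exact ⟨hlohi, le_refl _, by positivity, le_refl _, key⟩
  have hD : (((0 : ℝ), lam * Δl ^ 2) : ℝ × ℝ) ∈ ψ := by
    exact ⟨h2, h3, by positivity, le_of_eq (by ring), le_of_eq (by ring)⟩
  refine Set.Subset.antisymm ?_ (convexHull_min ?_ ?_)
  · -- Ψ ⊆ convexHull ψ
    rintro ⟨X, W⟩ ⟨hx1, hx2, hw, hl1, hl2⟩
    simp only [Set.mem_setOf_eq] at hx1 hx2 hw hl1 hl2 ⊢
    have hFmem : ((X, (0:ℝ)) : ℝ × ℝ) ∈ convexHull ℝ ψ := by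
      rcases eq_or_lt_of_le hlohi with heq | hlt
      · have : X = Xlo := le_antisymm (heq ▸ hx2) hx1
        exact hsub (this ▸ hA)
      · have hne : Xhi - Xlo ≠ 0 := by linarith
        apply hcvx.segment_subset (hsub hA) (hsub hB)
        refine seg2 (t := (X - Xlo) / (Xhi - Xlo))
          (div_nonneg (by linarith) (by linarith))
          (by rw [div_le_one (by linarith)]; linarith) ?_ (by ring)
        field_simp
        ring
    rcases le_total X 0 with hX | hX
    · -- left piece
      set L : ℝ := lam * ((Xlo + 2 * Δl) * X + Δl ^ 2) with hLdef
      have hWL : W ≤ L := hl2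
      have hL0 : 0 ≤ L := hw.trans hWL
      have hE : ((X, L) : ℝ × ℝ) ∈ convexHull ℝ ψ := by
        rcases eq_or_lt_of_le h2 with heq | hlt
        · have hX0 : X = 0 := le_antisymm hX (heq ▸ hx1)
          have hLv : L = lam * Δl ^ 2 := by rw [hLdef, hX0]; ring
          rw [hX0, hLv]; exact hsub hD
        · apply hcvx.segment_subset (hsub hC) (hsub hD)
          have hXlo : Xlo ≠ 0 := ne_of_lt hlt
          have ht0 : 0 ≤ X / Xlo := by
            rw [div_nonneg_iff]; right; exact ⟨hX, h2⟩
          have ht1 : X / Xlo ≤ 1 := by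
            rw [div_le_one_iff]; right; right; exact ⟨hlt, hx1⟩
          refine seg2 (t := 1 - X / Xlo) (by linarith) (by linarith) ?_ ?_
          · field_simp; ring
          · rw [hLdef]; field_simp; ring
      apply hcvx.segment_subset hFmem hE
      rcases eq_or_lt_of_le hL0 with heq | hLpos
      · have hW0 : W = 0 := le_antisymm (heq ▸ hWL) hw
        exact seg2 (t := 0) le_rfl zero_le_one (by ring) (by rw [hW0]; ring)
      · have hLne : L ≠ 0 := ne_of_gt hLpos
        refine seg2 (t := W / L) (by positivity)
          (by rw [div_le_one hLpos]; exact hWL) (by ring) ?_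
        field_simp; ring
    · -- right piece
      set L : ℝ := lam * ((Xhi - 2 * Δl) * X + Δl ^ 2) with hLdef
      have hWL : W ≤ L := hl1
      have hL0 : 0 ≤ L := hw.trans hWL
      have hE : ((X, L) : ℝ × ℝ) ∈ convexHull ℝ ψ := by
        rcases eq_or_lt_of_le h3 with heq | hlt
        · have hX0 : X = 0 := le_antisymm (heq ▸ hx2) hX
          have hLv : L = lam * Δl ^ 2 := by rw [hLdef, hX0]; ring
          rw [hX0, hLv]; exact hsub hD
        · apply hcvx.segment_subset (hsub hD) (hsub hB')
          have hXhi : Xhi ≠ 0 := (ne_of_lt hlt).symm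
          refine seg2 (t := X / Xhi) (div_nonneg hX hlt.le)
            (by rw [div_le_one hlt]; exact hx2) ?_ ?_
          · field_simp; ring
          · rw [hLdef]; field_simp; ring
      apply hcvx.segment_subset hFmem hE
      rcases eq_or_lt_of_le hL0 with heq | hLpos
      · have hW0 : W = 0 := le_antisymm (heq ▸ hWL) hw
        exact seg2 (t := 0) le_rfl zero_le_one (by ring) (by rw [hW0]; ring)
      · have hLne : L ≠ 0 := ne_of_gt hLpos
        refine seg2 (t := W / L) (by positivity)
          (by rw [div_le_one hLpos]; exact hWL) (by ring) ?_
        field_simp; ring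
  · -- ψ ⊆ Ψ
    rintro ⟨X, W⟩ ⟨hx1, hx2, hw, hp1, hp2⟩
    simp only [Set.mem_setOf_eq] at *
    refine ⟨hx1, hx2, hw, ?_, ?_⟩
    · rcases le_total X 0 with h | h
      · nlinarith [mul_nonneg hlam.le (mul_nonneg (neg_nonneg.2 h) (by linarith : (0:ℝ) ≤ X - Xhi + 4 * Δl))]
      · nlinarith [mul_nonneg hlam.le (mul_nonneg h (by linarith : (0:ℝ) ≤ Xhi - X))]
    · rcases le_total X 0 with h | h
      · nlinarith [mul_nonneg hlam.le (mul_nonneg (neg_nonneg.2 h) (by linarith : (0:ℝ) ≤ X - Xlo))]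
      · nlinarith [mul_nonneg hlam.le (mul_nonneg h (by linarith : (0:ℝ) ≤ Xlo - X + 4 * Δl))]
  · -- Ψ convex
    rintro ⟨p1, p2⟩ hp ⟨q1, q2⟩ hq a b ha hb hab
    obtain rfl : b = 1 - a := by linarith
    simp only [Set.mem_setOf_eq, Prod.smul_mk, smul_eq_mul, Prod.mk_add_mk] at hp hq ⊢
    obtain ⟨hp1, hp2, hp3, hp4, hp5⟩ := hp
    obtain ⟨hq1, hq2, hq3, hq4, hq5⟩ := hq
    refine ⟨?_, ?_, ?_, ?_, ?_⟩
    · nlinarith [mul_le_mul_of_nonneg_left hp1 ha, mul_le_mul_of_nonneg_left hq1 hb]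
    · nlinarith [mul_le_mul_of_nonneg_left hp2 ha, mul_le_mul_of_nonneg_left hq2 hb]
    · nlinarith [mul_le_mul_of_nonneg_left hp3 ha, mul_le_mul_of_nonneg_left hq3 hb]
    · nlinarith [mul_le_mul_of_nonneg_left hp4 ha, mul_le_mul_of_nonneg_left hq4 hb]
    · nlinarith [mul_le_mul_of_nonneg_left hp5 ha, mul_le_mul_of_nonneg_left hq5 hb]
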